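/- Given M > 0, let β_k = 1/(k+2) and η_{k+1} := [β_{k+1}(1 − β_k² − M η_k²)/(β_k(1−β_k)(1 − M η_k²))]·η_k with 0 < η_0 < 1/√(2M). Then for all k, η_k ≥ η_0(1 − 2Mη_0²)/(1 − Mη_0²) > 0; in particular the limit η⋆ := lim η_k exists and is positive. -/

import Mathlib

open Filter Topology

set_option maxHeartbeats 1000000 in

/-- With `0 < η_0 < 1/√(2M)`, the stepsize sequence is bounded below by the positive constant
`η_0(1 − 2Mη_0²)/(1 − Mη_0²)`; in particular its limit exists and is positive. -/
theorem eta_sequence_positive_limit (M : ℝ) (hM : 0 < M) (η : ℕ → ℝ)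
    (hη0 : 0 < η 0) (hη0' : η 0 < 1 / Real.sqrt (2 * M))
    (hrec : ∀ k : ℕ,
      η (k + 1) =
        ((1 / ((k : ℝ) + 3)) * (1 - (1 / ((k : ℝ) + 2)) ^ 2 - M * η k ^ 2) /
            ((1 / ((k : ℝ) + 2)) * (1 - 1 / ((k : ℝ) + 2)) * (1 - M * η k ^ 2))) * η k) :
    (∀ k : ℕ, η 0 * (1 - 2 * M * η 0 ^ 2) / (1 - M * η 0 ^ 2) ≤ η k) ∧
      0 < η 0 * (1 - 2 * M * η 0 ^ 2) / (1 - M * η 0 ^ 2) ∧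
      ∃ l : ℝ, 0 < l ∧ Tendsto η atTop (𝓝 l) := by
  have h2M : (0:ℝ) < 2 * M := by linarith
  have hsq : (0:ℝ) < Real.sqrt (2 * M) := Real.sqrt_pos.mpr h2M
  have h1 : η 0 * Real.sqrt (2 * M) < 1 := by
    rw [lt_div_iff₀ hsq] at hη0'; linarith
  have h2 : 2 * M * η 0 ^ 2 < 1 := by
    nlinarith [Real.sq_sqrt h2M.le, mul_pos hη0 hsq]
  obtain ⟨s, hs_def⟩ : ∃ s : ℝ, s = 1 - M * η 0 ^ 2 := ⟨_, rfl⟩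
  have hs : 1/2 < s := by rw [hs_def]; nlinarith
  have hs0 : (0:ℝ) < s := by linarith
  obtain ⟨D, hD_def⟩ : ∃ D : ℝ, D = M * η 0 ^ 3 / s := ⟨_, rfl⟩
  have hD0 : 0 ≤ D := by rw [hD_def]; positivity
  obtain ⟨c, hc_def⟩ : ∃ c : ℝ, c = η 0 * (1 - 2 * M * η 0 ^ 2) / (1 - M * η 0 ^ 2) := ⟨_, rfl⟩
  have hc : 0 < c := by
    rw [hc_def]; exact div_pos (mul_pos hη0 (by linarith)) (by nlinarith)
  have hcD : c = η 0 - D := by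
    rw [hc_def, hD_def, hs_def]
    have h0 : (1 : ℝ) - M * η 0 ^ 2 ≠ 0 := by nlinarith
    rw [eq_sub_iff_add_eq, ← add_div, div_eq_iff h0]
    ring
  -- step lemma
  have step : ∀ k : ℕ, c ≤ η k → η k ≤ η 0 →
      η (k+1) ≤ η k ∧ η k - D / (((k:ℝ)+1) * ((k:ℝ)+2)) ≤ η (k+1) := by
    intro k hlb hub
    have hηk : 0 < η k := lt_of_lt_of_le hc hlb
    have hsq' : η k ^ 2 ≤ η 0 ^ 2 := pow_le_pow_left₀ hηk.le hub 2
    have ht : s ≤ 1 - M * η k ^ 2 := by rw [hs_def]; nlinarith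
    have ht0 : (0:ℝ) < 1 - M * η k ^ 2 := by linarith
    have ha1 : (0:ℝ) < (k:ℝ) + 1 := by positivity
    have ha2 : (0:ℝ) < (k:ℝ) + 2 := by positivity
    have ha3 : (0:ℝ) < (k:ℝ) + 3 := by positivity
    have ha1' : ((k:ℝ) + 1) ≠ 0 := ha1.ne'
    have ha2' : ((k:ℝ) + 2) ≠ 0 := ha2.ne'
    have ha3' : ((k:ℝ) + 3) ≠ 0 := ha3.ne'
    have ht0' : (1 : ℝ) - M * η k ^ 2 ≠ 0 := ht0.ne'
    have hb' : (1 : ℝ) - 1 / ((k:ℝ) + 2) ≠ 0 := by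
      have : (0:ℝ) < 1 - 1 / ((k:ℝ) + 2) := by
        rw [sub_pos, div_lt_one ha2]; linarith
      exact this.ne'
    have hco : (1 / ((k:ℝ) + 3)) * (1 - (1 / ((k:ℝ) + 2)) ^ 2 - M * η k ^ 2) /
        ((1 / ((k:ℝ) + 2)) * (1 - 1 / ((k:ℝ) + 2)) * (1 - M * η k ^ 2))
        = 1 - M * η k ^ 2 / (((k:ℝ)+1) * (((k:ℝ)+3)) * (1 - M * η k ^ 2)) := by
      rw [div_eq_iff (by
        apply mul_ne_zero (mul_ne_zero ?_ ?_) ht0'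
        · positivity
        · exact hb')]
      field_simp
      ring
    have hform : η (k+1) = η k - M * η k ^ 3 / (((k:ℝ)+1) * ((k:ℝ)+3) * (1 - M * η k ^ 2)) := by
      rw [hrec k, hco]
      field_simp
    have hden : (0:ℝ) < ((k:ℝ)+1) * ((k:ℝ)+3) * (1 - M * η k ^ 2) := by positivity
    constructor
    · rw [hform]
      have : 0 ≤ M * η k ^ 3 / (((k:ℝ)+1) * ((k:ℝ)+3) * (1 - M * η k ^ 2)) := by positivity
      linarith
    · rw [hform]
      have hstep : M * η k ^ 3 / (((k:ℝ)+1) * ((k:ℝ)+3) * (1 - M * η k ^ 2))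
          ≤ D / (((k:ℝ)+1) * ((k:ℝ)+2)) := by
        rw [hD_def, div_div]
        rw [div_le_div_iff₀ hden (by positivity)]
        have hcube : η k ^ 3 ≤ η 0 ^ 3 := pow_le_pow_left₀ hηk.le hub 3
        have hA : M * η k ^ 3 ≤ M * η 0 ^ 3 :=
          mul_le_mul_of_nonneg_left hcube hM.le
        have hkk : ((k:ℝ)+1) * ((k:ℝ)+2) ≤ ((k:ℝ)+1) * ((k:ℝ)+3) :=
          mul_le_mul_of_nonneg_left (by linarith) (by linarith)
        have hB : s * (((k:ℝ)+1) * ((k:ℝ)+2))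
            ≤ (1 - M * η k ^ 2) * (((k:ℝ)+1) * ((k:ℝ)+3)) :=
          mul_le_mul ht hkk (by positivity) ht0.le
        have hMk3 : 0 ≤ M * η k ^ 3 := by positivity
        have hs12 : 0 ≤ (1 - M * η k ^ 2) * (((k:ℝ)+1) * ((k:ℝ)+3)) := by positivity
        have hcomb := mul_le_mul hA hB (by positivity) (le_trans hMk3 hA)
        linarith [hcomb]
      linarith
  -- main induction: lower bound with telescoping sum
  have key : ∀ k : ℕ, η 0 - D * (1 - 1/((k:ℝ)+1)) ≤ η k ∧ η k ≤ η 0 := by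
    intro k
    induction k with
    | zero => norm_num
    | succ k ih =>
      obtain ⟨hlb, hub⟩ := ih
      have ha1 : (0:ℝ) < (k:ℝ) + 1 := by positivity
      have ha2 : (0:ℝ) < (k:ℝ) + 2 := by positivity
      have hfrac : 0 ≤ 1 - 1/((k:ℝ)+1) := by
        have : 1/((k:ℝ)+1) ≤ 1 := by rw [div_le_one ha1]; linarith
        linarith
      have hDle : D * (1 - 1/((k:ℝ)+1)) ≤ D := by nlinarith [div_pos one_pos ha1]
      have hck : c ≤ η k := by rw [hcD]; linarith
      obtain ⟨hmon, hdec⟩ := step k hck hub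
      refine ⟨?_, hmon.trans hub⟩
      have hid : (1:ℝ) - 1/((k:ℝ)+1) + 1/(((k:ℝ)+1)*((k:ℝ)+2)) = 1 - 1/((k:ℝ)+2) := by
        field_simp
        ring
      have hDid : D * (1 - 1/((k:ℝ)+1)) + D * (1/(((k:ℝ)+1)*((k:ℝ)+2)))
          = D * (1 - 1/((k:ℝ)+2)) := by rw [← mul_add, hid]
      have hre : D / (((k:ℝ)+1)*((k:ℝ)+2)) = D * (1/(((k:ℝ)+1)*((k:ℝ)+2))) := by
        rw [mul_one_div]
      have hcast : ((k+1 : ℕ) : ℝ) + 1 = (k:ℝ) + 2 := by push_cast; ring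
      rw [hcast]
      rw [hre] at hdec
      linarith
  have hclb : ∀ k, c ≤ η k := by
    intro k
    obtain ⟨hlb, hub⟩ := key k
    have ha1 : (0:ℝ) < (k:ℝ) + 1 := by positivity
    have hDle : D * (1 - 1/((k:ℝ)+1)) ≤ D := by nlinarith [div_pos one_pos ha1]
    rw [hcD]; linarith
  refine ⟨fun k => hc_def ▸ hclb k, hc_def ▸ hc, ?_⟩
  have hant : Antitone η := antitone_nat_of_succ_le (fun k => (step k (hclb k) (key k).2).1)
  have hbdd : BddBelow (Set.range η) := ⟨c, by rintro _ ⟨k, rfl⟩; exact hclb k⟩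
  exact ⟨⨅ k, η k, lt_of_lt_of_le hc (le_ciInf hclb), tendsto_atTop_ciInf hant hbdd⟩
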